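/- With Γ ≤ G, ρ(Γ) ⊆ Γ, χ : Γ → U(1), (ρ,τ) an equivariant pair with τ C^∞, ν, μ ∈ ℝ, B := ν + μ(|∂τ/∂z(0)|² − |∂τ/∂z̄(0)|²), φ a C^∞ real gauge (i.e. i·Dφ(z)(v) = −(1/2)(conj(S(z))·v − S(z)·conj(v)) + (B/2)(conj(z)·v − z·conj(v)) for all z, v), χ_τ(γ) := χ(γ)·exp(i(φ(γ·0) − φ(0)))·j^{ν−B}(γ,0)·j^{μ}(ρ(γ),τ(0)), and λ ∈ ℂ: a C^∞ function F : ℂ → ℂ satisfies both F(γ·z) = χ(γ)·j^ν(γ,z)·j^μ(ρ(γ),τ(z))·F(z) for all γ ∈ Γ, z ∈ ℂ, and Δ^{ν,μ}_τ F = λ·F, if and only if G_F := exp(iφ)·F satisfies both G_F(γ·z) = χ_τ(γ)·j^{B}(γ,z)·G_F(z) for all γ ∈ Γ, z ∈ ℂ, and Δ_B G_F = λ·G_F. -/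

import Mathlib

open Complex MeasureTheory ComplexConjugate

noncomputable section

/-- The group `G = U(1) ⋉ ℂ`, as pairs `[a, b]` with `a ∈ U(1)`, `b ∈ ℂ`. -/
abbrev G1 : Type := Circle × ℂ

/-- Multiplication `[a,b][a',b'] = [aa', ab' + b]` in `G`. -/
def Gmul (g h : G1) : G1 := (g.1 * h.1, (g.1 : ℂ) * h.2 + g.2)

/-- Inverse `[a,b]⁻¹ = [a⁻¹, -a⁻¹ b]` in `G`. -/
def Ginv (g : G1) : G1 := (g.1⁻¹, -((g.1⁻¹ : Circle) : ℂ) * g.2)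

/-- The action `[a,b]·z = a z + b` of `G` on `ℂ`. -/
def Gact (g : G1) (z : ℂ) : ℂ := (g.1 : ℂ) * z + g.2

/-- `ρ : G → G` is a group homomorphism. -/
def IsGHom (ρ : G1 → G1) : Prop := ∀ g h, ρ (Gmul g h) = Gmul (ρ g) (ρ h)

/-- `(ρ, τ)` is an equivariant pair: `ρ` is a `G`-endomorphism and
`τ(g·z) = ρ(g)·τ(z)` for all `g ∈ G`, `z ∈ ℂ`. -/
def Equivariant (ρ : G1 → G1) (τ : ℂ → ℂ) : Prop :=
  IsGHom ρ ∧ ∀ g z, τ (Gact g z) = Gact (ρ g) (τ z)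

/-- The automorphy factor `j^α(g,z) = exp(-iα Im(z conj(g⁻¹·0)))`. -/
def jfac (α : ℝ) (g : G1) (z : ℂ) : ℂ :=
  Complex.exp (-Complex.I * α * ((z * conj (Gact (Ginv g) 0)).im : ℝ))

/-- Wirtinger derivative `∂f/∂z`. -/
def wdz (f : ℂ → ℂ) (z : ℂ) : ℂ :=
  (1/2 : ℂ) * (fderiv ℝ f z 1 - Complex.I * fderiv ℝ f z Complex.I)

/-- Wirtinger derivative `∂f/∂z̄`. -/
def wdzbar (f : ℂ → ℂ) (z : ℂ) : ℂ :=
  (1/2 : ℂ) * (fderiv ℝ f z 1 + Complex.I * fderiv ℝ f z Complex.I)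

/-- `S(z) = νz + μ(τ(z) ∂τ̄/∂z̄(z) − τ̄(z) ∂τ/∂z̄(z))`. -/
def Sfun (ν μ : ℝ) (τ : ℂ → ℂ) (z : ℂ) : ℂ :=
  (ν : ℂ) * z + (μ : ℂ) * (τ z * wdzbar (fun w => conj (τ w)) z - conj (τ z) * wdzbar τ z)

/-- Euclidean Laplacian `Δh = 4 ∂²h/∂z∂z̄`. -/
def lap (f : ℂ → ℂ) (z : ℂ) : ℂ := 4 * wdz (wdzbar f) z

/-- The mixed magnetic Schrödinger operator `Δ^{ν,μ}_τ`. -/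
def DeltaTau (ν μ : ℝ) (τ f : ℂ → ℂ) (z : ℂ) : ℂ :=
  lap f z
    + 2 * (Sfun ν μ τ z * wdz f z - conj (Sfun ν μ τ z) * wdzbar f z)
    - (‖Sfun ν μ τ z‖ : ℂ)^2 * f z
    + (μ : ℂ) * (τ z * lap (fun w => conj (τ w)) z - conj (τ z) * lap τ z) * f z

/-- The Landau Hamiltonian `Δ_B`. -/
def DeltaB (B : ℝ) (f : ℂ → ℂ) (z : ℂ) : ℂ :=
  lap f z + 2 * (B : ℂ) * (z * wdz f z - conj z * wdzbar f z)
    - (B : ℂ)^2 * (‖z‖ : ℂ)^2 * f z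

/-- The magnetic field `B(z) = ν + μ(|∂τ/∂z|² − |∂τ/∂z̄|²)`. -/
def Bfield (ν μ : ℝ) (τ : ℂ → ℂ) (z : ℂ) : ℝ :=
  ν + μ * ((‖wdz τ z‖)^2 - (‖wdzbar τ z‖)^2)

/-- `φ : ℂ → ℝ` is a smooth gauge: `θ^{ν,μ}_τ = θ_B + i dφ`, i.e.
`i·Dφ(z)(v) = −(1/2)(conj(S(z))v − S(z)conj(v)) + (B/2)(z̄v − z v̄)`. -/
def IsGauge (ν μ B : ℝ) (τ : ℂ → ℂ) (φ : ℂ → ℝ) : Prop :=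
  ContDiff ℝ (⊤ : ℕ∞) φ ∧ ∀ z v : ℂ,
    Complex.I * ((fderiv ℝ φ z v : ℝ) : ℂ) =
      -(1/2 : ℂ) * (conj (Sfun ν μ τ z) * v - Sfun ν μ τ z * conj v)
      + ((B : ℂ)/2) * (conj z * v - z * conj v)

/-- The pseudo-character
`χ_τ(γ) = χ(γ) exp(i(φ(γ·0) − φ(0))) j^{ν−B}(γ,0) j^μ(ρ(γ),τ(0))`. -/
def chiTau (ν μ B : ℝ) (ρ : G1 → G1) (τ : ℂ → ℂ) (φ : ℂ → ℝ) (χ : G1 → Circle)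
    (γ : G1) : ℂ :=
  (χ γ : ℂ) * Complex.exp (Complex.I * ((φ (Gact γ 0) - φ 0 : ℝ) : ℂ)) *
    jfac (ν - B) γ 0 * jfac μ (ρ γ) (τ 0)

section WirtingerHelpers

open ComplexConjugate

/-- conjugation as an `ℝ`-CLM on `ℂ` -/
def conjCLM : ℂ →L[ℝ] ℂ := Complex.conjCLE.toContinuousLinearMap

@[simp] lemma conjCLM_apply (z : ℂ) : conjCLM z = conj z := rfl

/-- multiplication by a complex constant as an `ℝ`-CLM on `ℂ` -/
def mulCLM (a : ℂ) : ℂ →L[ℝ] ℂ :=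
  (ContinuousLinearMap.mul ℂ ℂ a).restrictScalars ℝ

@[simp] lemma mulCLM_apply (a z : ℂ) : mulCLM a z = a * z := rfl

lemma fderiv_apply_decomp (f : ℂ → ℂ) (z : ℂ) (v : ℂ) :
    fderiv ℝ f z v = wdz f z * v + wdzbar f z * conj v := by
  have hv : v = (v.re : ℝ) • (1 : ℂ) + (v.im : ℝ) • Complex.I := by
    simp [Complex.real_smul, Complex.re_add_im]
  rw [hv, map_add, _root_.map_smul, _root_.map_smul]
  simp only [Complex.real_smul, wdz, wdzbar, smul_eq_mul, map_add, map_mul,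
    Complex.conj_ofReal, Complex.conj_I, mul_one, map_one]
  ring_nf
  linear_combination (↑v.im * fderiv ℝ f z Complex.I) * Complex.I_sq

lemma wdz_mul {f g : ℂ → ℂ} {z : ℂ} (hf : DifferentiableAt ℝ f z)
    (hg : DifferentiableAt ℝ g z) :
    wdz (fun w => f w * g w) z = wdz f z * g z + f z * wdz g z := by
  simp only [wdz, fderiv_fun_mul hf hg, ContinuousLinearMap.add_apply,
    ContinuousLinearMap.smul_apply, smul_eq_mul]
  ring

lemma wdzbar_mul {f g : ℂ → ℂ} {z : ℂ} (hf : DifferentiableAt ℝ f z)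
    (hg : DifferentiableAt ℝ g z) :
    wdzbar (fun w => f w * g w) z = wdzbar f z * g z + f z * wdzbar g z := by
  simp only [wdzbar, fderiv_fun_mul hf hg, ContinuousLinearMap.add_apply,
    ContinuousLinearMap.smul_apply, smul_eq_mul]
  ring

lemma wdzbar_conj {f : ℂ → ℂ} {z : ℂ} (hf : DifferentiableAt ℝ f z) :
    wdzbar (fun w => conj (f w)) z = conj (wdz f z) := by
  have hc : HasFDerivAt (fun w => conj (f w)) (conjCLM.comp (fderiv ℝ f z)) z :=
    conjCLM.hasFDerivAt.comp z hf.hasFDerivAt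
  simp only [wdzbar, wdz, hc.fderiv, ContinuousLinearMap.coe_comp', Function.comp_apply,
    conjCLM_apply, map_sub, map_mul, Complex.conj_I]
  simp only [map_one, map_div₀, map_ofNat]
  ring

lemma wdz_const (a : ℂ) (z : ℂ) : wdz (fun _ => a) z = 0 := by
  simp [wdz, fderiv_const]

lemma wdzbar_const (a : ℂ) (z : ℂ) : wdzbar (fun _ => a) z = 0 := by
  simp [wdzbar, fderiv_const]

lemma contDiff_wdz {f : ℂ → ℂ} (hf : ContDiff ℝ (⊤ : ℕ∞) f) :
    ContDiff ℝ (⊤ : ℕ∞) (wdz f) := by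
  have h1 : ContDiff ℝ (⊤ : ℕ∞) (fderiv ℝ f) := hf.fderiv_right (by simp)
  have h2 : ContDiff ℝ (⊤ : ℕ∞) (fun z => fderiv ℝ f z 1) := h1.clm_apply contDiff_const
  have h3 : ContDiff ℝ (⊤ : ℕ∞) (fun z => fderiv ℝ f z Complex.I) := h1.clm_apply contDiff_const
  exact contDiff_const.mul (h2.sub (contDiff_const.mul h3))

lemma contDiff_wdzbar {f : ℂ → ℂ} (hf : ContDiff ℝ (⊤ : ℕ∞) f) :
    ContDiff ℝ (⊤ : ℕ∞) (wdzbar f) := by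
  have h1 : ContDiff ℝ (⊤ : ℕ∞) (fderiv ℝ f) := hf.fderiv_right (by simp)
  have h2 : ContDiff ℝ (⊤ : ℕ∞) (fun z => fderiv ℝ f z 1) := h1.clm_apply contDiff_const
  have h3 : ContDiff ℝ (⊤ : ℕ∞) (fun z => fderiv ℝ f z Complex.I) := h1.clm_apply contDiff_const
  exact contDiff_const.mul (h2.add (contDiff_const.mul h3))

/-- the exponential of a linear expression in `w, conj w` times a constant -/
lemma expLin_hasFDerivAt (K p q : ℂ) (z : ℂ) :
    HasFDerivAt (fun w => K * Complex.exp (p * w + q * conj w))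
      ((K * Complex.exp (p * z + q * conj z)) • (p • mulCLM 1 + q • conjCLM)) z := by
  have hM : HasFDerivAt (fun w : ℂ => p * w + q * conj w) (p • mulCLM 1 + q • conjCLM) z := by
    have : HasFDerivAt (fun w : ℂ => (p • mulCLM 1 + q • conjCLM) w) (p • mulCLM 1 + q • conjCLM) z :=
      (p • mulCLM 1 + q • conjCLM).hasFDerivAt
    simpa [ContinuousLinearMap.add_apply, ContinuousLinearMap.smul_apply, smul_eq_mul] using this
  have hexp : HasFDerivAt Complex.exp
      ((ContinuousLinearMap.smulRight (1 : ℂ →L[ℂ] ℂ) (Complex.exp (p * z + q * conj z))).restrictScalars ℝ)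
      (p * z + q * conj z) :=
    ((Complex.hasDerivAt_exp _).hasFDerivAt).restrictScalars ℝ
  have hcomp := hexp.comp z hM
  have := hcomp.const_mul K
  refine this.congr_fderiv ?_
  ext v
  simp [ContinuousLinearMap.smul_apply, smul_eq_mul]
  ring

lemma expLin_fderiv (K p q : ℂ) (z v : ℂ) :
    fderiv ℝ (fun w => K * Complex.exp (p * w + q * conj w)) z v
      = K * Complex.exp (p * z + q * conj z) * (p * v + q * conj v) := by
  rw [(expLin_hasFDerivAt K p q z).fderiv]
  simp [ContinuousLinearMap.smul_apply, smul_eq_mul]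
  ring

lemma expLin_wdz (K p q : ℂ) (z : ℂ) :
    wdz (fun w => K * Complex.exp (p * w + q * conj w)) z
      = p * (K * Complex.exp (p * z + q * conj z)) := by
  simp only [wdz, expLin_fderiv, map_one, Complex.conj_I, mul_one]
  linear_combination ((K * Complex.exp (p * z + q * conj z)) * (q - p) / 2) * Complex.I_sq

lemma expLin_wdzbar (K p q : ℂ) (z : ℂ) :
    wdzbar (fun w => K * Complex.exp (p * w + q * conj w)) z
      = q * (K * Complex.exp (p * z + q * conj z)) := by
  simp only [wdzbar, expLin_fderiv, map_one, Complex.conj_I, mul_one]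
  linear_combination ((K * Complex.exp (p * z + q * conj z)) * (p - q) / 2) * Complex.I_sq

lemma expLin_contDiff (K p q : ℂ) :
    ContDiff ℝ (⊤ : ℕ∞) (fun w => K * Complex.exp (p * w + q * conj w)) := by
  have hM : ContDiff ℝ (⊤ : ℕ∞) (fun w : ℂ => p * w + q * conj w) := by
    have : ContDiff ℝ (⊤ : ℕ∞) (fun w : ℂ => (p • mulCLM 1 + q • conjCLM) w) :=
      (p • mulCLM 1 + q • conjCLM).contDiff
    simpa [ContinuousLinearMap.add_apply, ContinuousLinearMap.smul_apply, smul_eq_mul] using this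
  have hexp : ContDiff ℝ (⊤ : ℕ∞) Complex.exp := Complex.contDiff_exp (𝕜 := ℝ)
  exact contDiff_const.mul (hexp.comp hM)

lemma eq_of_sq_const {f : ℂ → ℂ} (hf : Continuous f) (hsq : ∀ w, f w ^ 2 = f 0 ^ 2) :
    ∀ w, f w = f 0 := by
  intro w
  rcases eq_or_ne (f 0) 0 with h0 | h0
  · have h := hsq w
    rw [h0] at h
    rw [h0]
    simpa [pow_eq_zero_iff] using h
  have hcases : ∀ v : ℂ, f v = f 0 ∨ f v = -f 0 := by
    intro v
    have h : (f v - f 0) * (f v + f 0) = 0 := by linear_combination hsq v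
    rcases mul_eq_zero.1 h with h | h
    · exact Or.inl (by linear_combination h)
    · exact Or.inr (by linear_combination h)
  by_contra hne
  have hw : f w = -f 0 := (hcases w).resolve_left hne
  set g : ℝ → ℝ := fun t => ((f ((t : ℝ) • w)) / f 0).re with hg
  have hgc : Continuous g :=
    Complex.continuous_re.comp ((hf.comp (continuous_id.smul continuous_const)).div_const _)
  have hg0 : g 0 = 1 := by simp [hg, div_self h0]
  have hg1 : g 1 = -1 := by
    simp [hg, hw, neg_div, div_self h0]
  have h0mem : (0 : ℝ) ∈ Set.Icc (g 1) (g 0) := by rw [hg0, hg1]; constructor <;> norm_num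
  obtain ⟨t, _, hgt⟩ := intermediate_value_Icc' (by norm_num : (0:ℝ) ≤ 1) hgc.continuousOn h0mem
  have hgt' : ((f ((t : ℝ) • w)) / f 0).re = 0 := hgt
  rcases hcases ((t : ℝ) • w) with h | h
  · rw [h, div_self h0] at hgt'; simp at hgt'
  · rw [h, neg_div, div_self h0] at hgt'; simp at hgt'

lemma const_of_relations {f A : ℂ → ℂ} (hf : Continuous f)
    (hA : ∀ b, f b = A b * f 0)
    (hAmul : ∀ x y, A (x + y) = A x * A y)
    (hnegf : ∀ w, f (-w) = f w) :
    ∀ w, f w = f 0 := by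
  rcases eq_or_ne (f 0) 0 with h0 | h0
  · intro w; rw [hA w, h0, mul_zero]
  have hA0 : A 0 = 1 := by
    have h := hA 0
    have h2 : (A 0 - 1) * f 0 = 0 := by linear_combination -h
    rcases mul_eq_zero.1 h2 with h3 | h3
    · linear_combination h3
    · exact absurd h3 h0
  have hsq : ∀ w, f w ^ 2 = f 0 ^ 2 := by
    intro w
    have h3 := hAmul w (-w)
    rw [add_neg_cancel, hA0] at h3
    have h4 : f w * f (-w) = f 0 ^ 2 := by
      rw [hA w, hA (-w)]
      linear_combination (f 0 ^ 2) * h3.symm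
    rw [hnegf w] at h4
    linear_combination h4
  exact eq_of_sq_const hf hsq

lemma tau_affine {ρ : G1 → G1} {τ : ℂ → ℂ} (hequiv : Equivariant ρ τ)
    (hτ : ContDiff ℝ (⊤ : ℕ∞) τ) :
    ∃ c d : ℂ, (∀ z, wdz τ z = c) ∧ (∀ z, wdzbar τ z = d) ∧
      (∀ z, τ z = τ 0 + c * z + d * conj z) := by
  obtain ⟨hom, heq⟩ := hequiv
  have hdiff : Differentiable ℝ τ := hτ.differentiable (by simp)
  have hrel : ∀ g : G1, ∀ z v : ℂ,
      fderiv ℝ τ (Gact g z) (((g.1 : ℂ)) * v) = ((ρ g).1 : ℂ) * fderiv ℝ τ z v := by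
    intro g z v
    have h1 : (fun w => τ (Gact g w)) = (fun w => ((ρ g).1 : ℂ) * τ w + (ρ g).2) := by
      funext w
      rw [heq g w]; rfl
    have hinner : HasFDerivAt (fun w : ℂ => Gact g w) (mulCLM (g.1 : ℂ)) z := by
      have h := ((mulCLM (g.1 : ℂ)).hasFDerivAt (x := z)).add_const g.2
      simpa [Gact] using h
    have hL : HasFDerivAt (fun w => τ (Gact g w))
        ((fderiv ℝ τ (Gact g z)).comp (mulCLM (g.1 : ℂ))) z :=
      ((hdiff (Gact g z)).hasFDerivAt).comp z hinner
    have hR : HasFDerivAt (fun w => ((ρ g).1 : ℂ) * τ w + (ρ g).2)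
        (((ρ g).1 : ℂ) • fderiv ℝ τ z) z :=
      (((hdiff z).hasFDerivAt).const_mul _).add_const _
    rw [h1] at hL
    have h2 := hL.unique hR
    have h3 := congrArg (fun (L : ℂ →L[ℝ] ℂ) => L v) h2
    simpa using h3
  have hwrel : ∀ g : G1, ∀ z : ℂ,
      wdz τ (Gact g z) * (g.1 : ℂ) = ((ρ g).1 : ℂ) * wdz τ z ∧
      wdzbar τ (Gact g z) * conj (g.1 : ℂ) = ((ρ g).1 : ℂ) * wdzbar τ z := by
    intro g z
    have e1 := hrel g z 1
    have eI := hrel g z Complex.I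
    rw [fderiv_apply_decomp τ (Gact g z), fderiv_apply_decomp τ z] at e1 eI
    simp only [mul_one, map_one, map_mul, Complex.conj_I] at e1 eI
    constructor
    · linear_combination (1/2) * e1 - (Complex.I/2) * eI +
        ((wdz τ (Gact g z) * (g.1:ℂ) - wdzbar τ (Gact g z) * conj (g.1:ℂ)
          - ((ρ g).1:ℂ) * wdz τ z + ((ρ g).1:ℂ) * wdzbar τ z)/2) * Complex.I_sq
    · linear_combination (1/2) * e1 + (Complex.I/2) * eI +
        ((wdzbar τ (Gact g z) * conj (g.1:ℂ) - wdz τ (Gact g z) * (g.1:ℂ)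
          - ((ρ g).1:ℂ) * wdzbar τ z + ((ρ g).1:ℂ) * wdz τ z)/2) * Complex.I_sq
  have hcont_c : Continuous (wdz τ) := (contDiff_wdz hτ).continuous
  have hcont_d : Continuous (wdzbar τ) := (contDiff_wdzbar hτ).continuous
  have hcA : ∀ b : ℂ, wdz τ b = ((ρ (1, b)).1 : ℂ) * wdz τ 0 := by
    intro b
    have h := (hwrel (1, b) 0).1
    simpa [Gact] using h
  have hdA : ∀ b : ℂ, wdzbar τ b = ((ρ (1, b)).1 : ℂ) * wdzbar τ 0 := by
    intro b
    have h := (hwrel (1, b) 0).2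
    simpa [Gact] using h
  have hAmul : ∀ x y : ℂ, ((ρ (1, x + y)).1 : ℂ) = ((ρ (1, x)).1 : ℂ) * ((ρ (1, y)).1 : ℂ) := by
    intro x y
    have h := hom (1, x) (1, y)
    have hg : Gmul ((1 : Circle), x) ((1 : Circle), y) = ((1 : Circle), x + y) := by
      simp [Gmul, add_comm]
    rw [hg] at h
    have h2 := congrArg (fun g : G1 => ((g.1 : ℂ))) h
    simpa [Gmul] using h2
  have hrotc : ∀ (u : Circle) (w : ℂ), wdz τ ((u : ℂ) * w) * (u : ℂ) = ((ρ (u, 0)).1 : ℂ) * wdz τ w := by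
    intro u w; simpa [Gact] using (hwrel (u, 0) w).1
  have hrotd : ∀ (u : Circle) (w : ℂ), wdzbar τ ((u : ℂ) * w) * conj (u : ℂ) = ((ρ (u, 0)).1 : ℂ) * wdzbar τ w := by
    intro u w; simpa [Gact] using (hwrel (u, 0) w).2
  obtain ⟨mone, hmone⟩ : ∃ u : Circle, (u : ℂ) = -1 := ⟨⟨-1, mem_sphere_zero_iff_norm.2 (by norm_num)⟩, rfl⟩
  -- main constancy claims
  have hmain : (∀ z, wdz τ z = wdz τ 0) ∧ (∀ z, wdzbar τ z = wdzbar τ 0) := by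
    rcases eq_or_ne (wdz τ 0) 0 with hc0 | hc0
    · have hc : ∀ z, wdz τ z = wdz τ 0 := by
        intro z; rw [hcA z, hc0, mul_zero]
      rcases eq_or_ne (wdzbar τ 0) 0 with hd0 | hd0
      · refine ⟨hc, fun z => by rw [hdA z, hd0, mul_zero]⟩
      · -- use d
        have hρu : ∀ u : Circle, ((ρ (u, 0)).1 : ℂ) = conj (u : ℂ) := by
          intro u
          have h := hrotd u 0
          rw [mul_zero] at h
          have h2 : (wdzbar τ 0) * (conj (u:ℂ) - ((ρ (u, 0)).1 : ℂ)) = 0 := by linear_combination h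
          rcases mul_eq_zero.1 h2 with h3 | h3
          · exact absurd h3 hd0
          · linear_combination -h3
        have hdinv : ∀ (u : Circle) (w : ℂ), wdzbar τ ((u : ℂ) * w) = wdzbar τ w := by
          intro u w
          have h := hrotd u w
          rw [hρu] at h
          have hu : conj (u : ℂ) ≠ 0 := by
            simpa using Circle.coe_ne_zero u
          exact mul_right_cancel₀ hu (by linear_combination h)
        have hnegd : ∀ w : ℂ, wdzbar τ (-w) = wdzbar τ w := by
          intro w
          have := hdinv mone w
          rwa [hmone, neg_one_mul] at this
        have hd := const_of_relations hcont_d hdA hAmul hnegd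
        exact ⟨hc, hd⟩
    · -- use c
      have hρu : ∀ u : Circle, ((ρ (u, 0)).1 : ℂ) = (u : ℂ) := by
        intro u
        have h := hrotc u 0
        rw [mul_zero] at h
        have h2 : (wdz τ 0) * ((u:ℂ) - ((ρ (u, 0)).1 : ℂ)) = 0 := by linear_combination h
        rcases mul_eq_zero.1 h2 with h3 | h3
        · exact absurd h3 hc0
        · linear_combination -h3
      have hcinv : ∀ (u : Circle) (w : ℂ), wdz τ ((u : ℂ) * w) = wdz τ w := by
        intro u w
        have h := hrotc u w
        rw [hρu] at h
        have hu : (u : ℂ) ≠ 0 := Circle.coe_ne_zero u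
        exact mul_right_cancel₀ hu (by linear_combination h)
      have hnegc : ∀ w : ℂ, wdz τ (-w) = wdz τ w := by
        intro w
        have := hcinv mone w
        rwa [hmone, neg_one_mul] at this
      have hc := const_of_relations hcont_c hcA hAmul hnegc
      have hA1 : ∀ b : ℂ, ((ρ (1, b)).1 : ℂ) = 1 := by
        intro b
        have h := hcA b
        rw [hc b] at h
        have h2 : (wdz τ 0) * (1 - ((ρ (1, b)).1 : ℂ)) = 0 := by linear_combination h
        rcases mul_eq_zero.1 h2 with h3 | h3
        · exact absurd h3 hc0
        · linear_combination -h3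
      have hd : ∀ z, wdzbar τ z = wdzbar τ 0 := by
        intro z
        rw [hdA z, hA1 z, one_mul]
      exact ⟨hc, hd⟩
  obtain ⟨hc, hd⟩ := hmain
  refine ⟨wdz τ 0, wdzbar τ 0, hc, hd, ?_⟩
  -- affinity
  set M : ℂ →L[ℝ] ℂ := (wdz τ 0) • mulCLM 1 + (wdzbar τ 0) • conjCLM with hM
  have hMapp : ∀ v : ℂ, M v = wdz τ 0 * v + wdzbar τ 0 * conj v := by
    intro v
    simp [hM, ContinuousLinearMap.add_apply, ContinuousLinearMap.smul_apply, smul_eq_mul]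
  have hL : ∀ z : ℂ, fderiv ℝ τ z = M := by
    intro z
    ext v
    rw [fderiv_apply_decomp τ z v, hc z, hd z, hMapp v]
  have hdiffg : Differentiable ℝ (fun w => τ w - M w) := hdiff.sub M.differentiable
  have hzero : ∀ z : ℂ, fderiv ℝ (fun w => τ w - M w) z = 0 := by
    intro z
    rw [fderiv_fun_sub (hdiff z) (M.differentiableAt), hL z, M.fderiv, sub_self]
  intro z
  have hconst := is_const_of_fderiv_eq_zero hdiffg hzero z 0
  have hM0 : M 0 = 0 := M.map_zero
  have hMz := hMapp z
  rw [hM0] at hconst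
  rw [sub_zero] at hconst
  linear_combination hconst + hMz

lemma wdz_add {f g : ℂ → ℂ} {z : ℂ} (hf : DifferentiableAt ℝ f z)
    (hg : DifferentiableAt ℝ g z) :
    wdz (fun w => f w + g w) z = wdz f z + wdz g z := by
  simp only [wdz, fderiv_fun_add hf hg, ContinuousLinearMap.add_apply]
  ring

lemma wdzbar_add {f g : ℂ → ℂ} {z : ℂ} (hf : DifferentiableAt ℝ f z)
    (hg : DifferentiableAt ℝ g z) :
    wdzbar (fun w => f w + g w) z = wdzbar f z + wdzbar g z := by
  simp only [wdzbar, fderiv_fun_add hf hg, ContinuousLinearMap.add_apply]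
  ring

lemma wdz_const_mul {f : ℂ → ℂ} {z : ℂ} (a : ℂ) (hf : DifferentiableAt ℝ f z) :
    wdz (fun w => a * f w) z = a * wdz f z := by
  simp only [wdz, fderiv_const_mul hf a, ContinuousLinearMap.smul_apply, smul_eq_mul]
  ring

lemma wdzbar_const_mul {f : ℂ → ℂ} {z : ℂ} (a : ℂ) (hf : DifferentiableAt ℝ f z) :
    wdzbar (fun w => a * f w) z = a * wdzbar f z := by
  simp only [wdzbar, fderiv_const_mul hf a, ContinuousLinearMap.smul_apply, smul_eq_mul]
  ring

lemma im_ofReal (w : ℂ) : ((w.im : ℝ) : ℂ) = -Complex.I * (w - conj w) / 2 := by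
  rw [Complex.sub_conj]
  push_cast
  linear_combination (w.im : ℂ) * Complex.I_sq

lemma abs_sq_c (w : ℂ) : ((‖w‖ : ℝ) : ℂ) ^ 2 = w * conj w := by
  rw [← Complex.ofReal_pow, Complex.sq_norm]
  exact_mod_cast (Complex.mul_conj w).symm

lemma jfac_exp (α : ℝ) (g : G1) (z : ℂ) :
    jfac α g z = Complex.exp (Complex.I * α * ((((g.1 : ℂ)) * conj g.2 * z).im : ℝ)) := by
  rw [jfac]
  congr 1
  have h2 : z * conj (Gact (Ginv g) 0) = -((g.1 : ℂ) * conj g.2 * z) := by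
    simp only [Gact, Ginv, Circle.coe_inv_eq_conj, mul_zero, zero_add, map_neg, map_mul,
      Complex.conj_conj]
    ring
  rw [h2, Complex.neg_im]
  push_cast
  ring

/-- `F` is a mixed automorphic eigenfunction of `Δ^{ν,μ}_τ` with
eigenvalue `λ` iff `G_F = e^{iφ} F` is a classical `(Γ,χ_τ)`-automorphic
eigenfunction of the Landau Hamiltonian `Δ_B` with the same eigenvalue. -/
theorem lifting_eigenspaces
    (Γ : Set G1) (hone : ((1 : Circle), (0 : ℂ)) ∈ Γ)
    (hmul : ∀ g ∈ Γ, ∀ h ∈ Γ, Gmul g h ∈ Γ) (hinv : ∀ g ∈ Γ, Ginv g ∈ Γ)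
    (ρ : G1 → G1) (τ : ℂ → ℂ) (hequiv : Equivariant ρ τ)
    (hρΓ : ∀ γ ∈ Γ, ρ γ ∈ Γ)
    (hτ : ContDiff ℝ (⊤ : ℕ∞) τ) (χ : G1 → Circle) (ν μ : ℝ)
    (φ : ℂ → ℝ) (hφ : IsGauge ν μ (Bfield ν μ τ 0) τ φ)
    (lam : ℂ) (F : ℂ → ℂ) (hF : ContDiff ℝ (⊤ : ℕ∞) F) :
    ((∀ γ ∈ Γ, ∀ z : ℂ,
        F (Gact γ z) = (χ γ : ℂ) * jfac ν γ z * jfac μ (ρ γ) (τ z) * F z) ∧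
      (∀ z : ℂ, DeltaTau ν μ τ F z = lam * F z)) ↔
      ((∀ γ ∈ Γ, ∀ z : ℂ,
        Complex.exp (Complex.I * ((φ (Gact γ z) : ℝ) : ℂ)) * F (Gact γ z) =
          chiTau ν μ (Bfield ν μ τ 0) ρ τ φ χ γ * jfac (Bfield ν μ τ 0) γ z *
            (Complex.exp (Complex.I * ((φ z : ℝ) : ℂ)) * F z)) ∧
      (∀ z : ℂ,
        DeltaB (Bfield ν μ τ 0) (fun w => Complex.exp (Complex.I * ((φ w : ℝ) : ℂ)) * F w) z =
          lam * (Complex.exp (Complex.I * ((φ z : ℝ) : ℂ)) * F z))) := by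
  obtain ⟨c, d, hc, hd, htau⟩ := tau_affine hequiv hτ
  obtain ⟨hom, heq⟩ := hequiv
  have hdiffτ : Differentiable ℝ τ := hτ.differentiable (by simp)
  set B : ℝ := Bfield ν μ τ 0 with hB
  have hBc : (B : ℂ) = (ν : ℂ) + (μ : ℂ) * (c * conj c - d * conj d) := by
    rw [hB, Bfield, hc 0, hd 0]
    push_cast
    rw [abs_sq_c, abs_sq_c]
  set s₀ : ℂ := (μ : ℂ) * (conj c * τ 0 - d * conj (τ 0)) with hs₀
  clear_value s₀
  -- S is affine
  have hwbc : ∀ z : ℂ, wdzbar (fun w => conj (τ w)) z = conj c := by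
    intro z
    rw [wdzbar_conj (hdiffτ z), hc z]
  have hS : ∀ z : ℂ, Sfun ν μ τ z = (B : ℂ) * z + s₀ := by
    intro z
    rw [Sfun, hwbc z, hd z, htau z, hBc, hs₀]
    simp only [map_add, map_mul, Complex.conj_conj]
    ring
  -- vanishing laplacians of τ
  have hlapτ : ∀ z : ℂ, lap τ z = 0 := by
    intro z
    have h : wdzbar τ = fun _ => d := funext hd
    rw [lap, h, wdz_const, mul_zero]
  have hlapτb : ∀ z : ℂ, lap (fun w => conj (τ w)) z = 0 := by
    intro z
    have h : wdzbar (fun w => conj (τ w)) = fun _ => conj c := funext hwbc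
    rw [lap, h, wdz_const, mul_zero]
  -- the gauge formula
  have hφdiff : Differentiable ℝ φ := hφ.1.differentiable (by simp)
  have hdφ : ∀ z v : ℂ, (fderiv ℝ φ z v : ℝ) = -((conj s₀) * v).im := by
    intro z v
    have h := hφ.2 z v
    rw [hS z] at h
    simp only [map_add, map_mul, Complex.conj_ofReal] at h
    have hw : conj s₀ * v - s₀ * conj v = ((2 * ((conj s₀ * v)).im : ℝ) : ℂ) * Complex.I := by
      rw [← Complex.sub_conj]
      simp only [map_mul, Complex.conj_conj]
    have h2 : Complex.I * ((fderiv ℝ φ z v : ℝ) : ℂ)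
        = Complex.I * ((-(conj s₀ * v).im : ℝ) : ℂ) := by
      push_cast
      push_cast at hw
      linear_combination h - (1/2) * hw
    have h3 := mul_left_cancel₀ Complex.I_ne_zero h2
    exact_mod_cast h3
  have hφval : ∀ w : ℂ, φ w = φ 0 - ((conj s₀) * w).im := by
    have hN : Differentiable ℝ (fun w : ℂ => ((conj s₀) * w).im) :=
      (Complex.imCLM.comp (mulCLM (conj s₀))).differentiable
    have hψdiff : Differentiable ℝ (fun w : ℂ => φ w + ((conj s₀) * w).im) :=
      hφdiff.add hN
    have hzero : ∀ w : ℂ, fderiv ℝ (fun w : ℂ => φ w + ((conj s₀) * w).im) w = 0 := by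
      intro w
      have hN' : DifferentiableAt ℝ (fun w : ℂ => ((conj s₀) * w).im) w := hN w
      rw [fderiv_fun_add (hφdiff w) hN']
      have hNf : fderiv ℝ (fun w : ℂ => ((conj s₀) * w).im) w
          = Complex.imCLM.comp (mulCLM (conj s₀)) :=
        (Complex.imCLM.comp (mulCLM (conj s₀))).fderiv
      rw [hNf]
      ext v
      simp only [ContinuousLinearMap.add_apply, ContinuousLinearMap.coe_comp',
        Function.comp_apply, mulCLM_apply, Complex.imCLM_apply,
        ContinuousLinearMap.zero_apply]
      have := hdφ w v
      linarith [this]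
    intro w
    have h := is_const_of_fderiv_eq_zero hψdiff hzero w 0
    simp only [mul_zero, Complex.zero_im, add_zero] at h
    linarith [h]
  -- relations for each group element
  have haa : ∀ g : G1, ((g.1 : ℂ)) * conj (g.1 : ℂ) = 1 := by
    intro g
    rw [Complex.mul_conj, Circle.normSq_coe]
    norm_num
  have hrels : ∀ g : G1,
      (c * (g.1 : ℂ) = ((ρ g).1 : ℂ) * c) ∧
      (d * conj (g.1 : ℂ) = ((ρ g).1 : ℂ) * d) ∧
      ((ρ g).2 = τ 0 + c * g.2 + d * conj g.2 - ((ρ g).1 : ℂ) * τ 0) := by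
    intro g
    have e : ∀ z : ℂ, τ 0 + c * ((g.1 : ℂ) * z + g.2) + d * conj ((g.1 : ℂ) * z + g.2)
        = ((ρ g).1 : ℂ) * (τ 0 + c * z + d * conj z) + (ρ g).2 := by
      intro z
      have h := heq g z
      rw [htau (Gact g z), htau z] at h
      simpa [Gact] using h
    have e0 := e 0
    have e1 := e 1
    have eI := e Complex.I
    simp only [map_add, map_mul, Complex.conj_I, mul_zero, map_zero, add_zero, mul_one,
      map_one, zero_add] at e0 e1 eI
    refine ⟨?_, ?_, by linear_combination -e0⟩
    · linear_combination (1/2) * e1 - (1/2) * e0 - (Complex.I/2) * eI + (Complex.I/2) * e0 +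
        ((c * (g.1:ℂ) - d * conj (g.1:ℂ) - ((ρ g).1:ℂ) * c + ((ρ g).1:ℂ) * d)/2) * Complex.I_sq
    · linear_combination (1/2) * e1 - (1/2) * e0 + (Complex.I/2) * eI - (Complex.I/2) * e0 +
        ((d * conj (g.1:ℂ) - ((ρ g).1:ℂ) * d - c * (g.1:ℂ) + ((ρ g).1:ℂ) * c)/2) * Complex.I_sq
  -- the key cocycle identity
  have key : ∀ g : G1, ∀ z : ℂ,
      Complex.exp (Complex.I * ((φ (Gact g z) : ℝ) : ℂ)) * (jfac ν g z * jfac μ (ρ g) (τ z))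
      = Complex.exp (Complex.I * ((φ (Gact g 0) - φ 0 : ℝ) : ℂ)) * jfac (ν - B) g 0 *
          jfac μ (ρ g) (τ 0) * jfac B g z * Complex.exp (Complex.I * ((φ z : ℝ) : ℂ)) := by
    intro g z
    obtain ⟨h3, h4, hbp⟩ := hrels g
    have h5 := congrArg (starRingEnd ℂ) h3
    have h6 := congrArg (starRingEnd ℂ) h4
    simp only [map_mul, Complex.conj_conj] at h5 h6
    have h1 := haa g
    have h2 := haa (ρ g)
    rw [jfac_exp, jfac_exp, jfac_exp, jfac_exp, jfac_exp]
    rw [← Complex.exp_add, ← Complex.exp_add, ← Complex.exp_add, ← Complex.exp_add,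
      ← Complex.exp_add, ← Complex.exp_add]
    congr 1
    rw [hφval (Gact g z), hφval z, hφval (Gact g 0)]
    simp only [Gact, mul_zero, zero_add, Complex.zero_im]
    rw [htau z, hbp, hs₀]
    push_cast
    simp only [im_ofReal]
    rw [hBc]
    simp only [map_add, map_mul, map_sub, map_neg, Complex.conj_conj, Complex.conj_ofReal]
    linear_combination ((1/2)*(g.1:ℂ)*conj g.2*c*conj c*(μ:ℂ)*z + (-1/2)*(g.1:ℂ)*conj g.2*d*conj d*(μ:ℂ)*z + (1/2)*(g.1:ℂ)*c*conj (τ 0)*(μ:ℂ)*z + (-1/2)*(g.1:ℂ)*conj d*τ 0*(μ:ℂ)*z + (-1/2)*conj (g.1:ℂ)*g.2*c*conj c*(μ:ℂ)*conj z + (1/2)*conj (g.1:ℂ)*g.2*d*conj d*(μ:ℂ)*conj z + (-1/2)*conj (g.1:ℂ)*conj c*τ 0*(μ:ℂ)*conj z + (1/2)*conj (g.1:ℂ)*d*conj (τ 0)*(μ:ℂ)*conj z + (1/2)*((ρ g).1:ℂ)*conj ((ρ g).1:ℂ)*c*conj (τ 0)*(μ:ℂ)*z + (-1/2)*((ρ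 g).1:ℂ)*conj ((ρ g).1:ℂ)*conj c*τ 0*(μ:ℂ)*conj z + (1/2)*((ρ g).1:ℂ)*conj ((ρ g).1:ℂ)*d*conj (τ 0)*(μ:ℂ)*conj z + (-1/2)*((ρ g).1:ℂ)*conj ((ρ g).1:ℂ)*conj d*τ 0*(μ:ℂ)*z + (-1/2)*((ρ g).1:ℂ)*g.2*c*conj d*(μ:ℂ)*z + (-1/2)*((ρ g).1:ℂ)*g.2*d*conj d*(μ:ℂ)*conj z + (-1/2)*((ρ g).1:ℂ)*conj g.2*c*conj c*(μ:ℂ)*z + (-1/2)*((ρ g).1:ℂ)*conj g.2*conj c*d*(μ:ℂ)*conj z + (-1/2)*((ρ g).1:ℂ)*c*conj (τ 0)*(μ:ℂ)*z + (-1/2)*((ρ g).1:ℂ)*d*conj (τ 0)*(μ:ℂ)*conj z + (1/2)*conj ((ρ g).1:ℂ)*g.2*c*conj c*(μ:ℂ)*conj z + (1/2)*conj ((ρ g).1:ℂ)*g.2*c*conj d*(μ:ℂ)*z + (1/2)*conj ((ρ g).1:ℂ)*conj g.2*conj c*d*(μ:ℂ)*conj z + (1/2)*conj ((ρ g).1:ℂ)*conj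 g.2*d*conj d*(μ:ℂ)*z + (1/2)*conj ((ρ g).1:ℂ)*conj c*τ 0*(μ:ℂ)*conj z + (1/2)*conj ((ρ g).1:ℂ)*conj d*τ 0*(μ:ℂ)*z + (-1/2)*c*conj (τ 0)*(μ:ℂ)*z + (1/2)*conj c*τ 0*(μ:ℂ)*conj z + (-1/2)*d*conj (τ 0)*(μ:ℂ)*conj z + (1/2)*conj d*τ 0*(μ:ℂ)*z) * Complex.I_sq + ((-1/2)*c*conj (τ 0)*(μ:ℂ)*z + (1/2)*conj c*τ 0*(μ:ℂ)*conj z + (-1/2)*d*conj (τ 0)*(μ:ℂ)*conj z + (1/2)*conj d*τ 0*(μ:ℂ)*z) * h2 + ((-1/2)*g.2*conj d*(μ:ℂ)*z + (-1/2)*conj g.2*conj c*(μ:ℂ)*z + (-1/2)*conj (τ 0)*(μ:ℂ)*z) * h3 + ((-1/2)*g.2*conj d*(μ:ℂ)*conj z + (-1/2)*conj g.2*conj c*(μ:ℂ)*conj z + (-1/2)*conj (τ 0)*(μ:ℂ)*conj z) * h4 + ((1/2)*g.2*c*(μ:ℂ)*conj z + (1/2)*conj g.2*d*(μ:ℂ)*conj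 z + (1/2)*τ 0*(μ:ℂ)*conj z) * h5 + ((1/2)*g.2*c*(μ:ℂ)*z + (1/2)*conj g.2*d*(μ:ℂ)*z + (1/2)*τ 0*(μ:ℂ)*z) * h6
  -- the intertwining of Laplacians
  have hlap : ∀ z : ℂ,
      DeltaB B (fun w => Complex.exp (Complex.I * ((φ w : ℝ) : ℂ)) * F w) z
      = Complex.exp (Complex.I * ((φ z : ℝ) : ℂ)) * DeltaTau ν μ τ F z := by
    have hEphi : ∀ w : ℂ, Complex.exp (Complex.I * ((φ w : ℝ) : ℂ))
        = Complex.exp (Complex.I * ((φ 0 : ℝ) : ℂ)) *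
          Complex.exp ((-(conj s₀)/2) * w + (s₀/2) * conj w) := by
      intro w
      rw [← Complex.exp_add]
      congr 1
      rw [hφval w]
      push_cast
      rw [im_ofReal]
      simp only [map_mul, Complex.conj_conj]
      linear_combination ((conj s₀ * w - s₀ * conj w)/2) * Complex.I_sq
    set K : ℂ := Complex.exp (Complex.I * ((φ 0 : ℝ) : ℂ)) with hK
    clear_value K
    have hGf : (fun w => Complex.exp (Complex.I * ((φ w : ℝ) : ℂ)) * F w)
        = fun w => (K * Complex.exp ((-(conj s₀)/2) * w + (s₀/2) * conj w)) * F w := by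
      funext w
      rw [hEphi w]
    intro z
    rw [hGf, hEphi z]
    have hEdiff : ∀ w, DifferentiableAt ℝ
        (fun x => K * Complex.exp ((-(conj s₀)/2) * x + (s₀/2) * conj x)) w :=
      fun w => ((expLin_contDiff K (-(conj s₀)/2) (s₀/2)).differentiable (by simp)) w
    have hFdiff : ∀ w, DifferentiableAt ℝ F w := fun w => (hF.differentiable (by simp)) w
    have hFbdiff : ∀ w, DifferentiableAt ℝ (wdzbar F) w :=
      fun w => ((contDiff_wdzbar hF).differentiable (by simp)) w
    have hwb : ∀ w, wdzbar (fun x =>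
          (K * Complex.exp ((-(conj s₀)/2) * x + (s₀/2) * conj x)) * F x) w
        = (K * Complex.exp ((-(conj s₀)/2) * w + (s₀/2) * conj w)) *
            ((s₀/2) * F w + wdzbar F w) := by
      intro w
      rw [wdzbar_mul (hEdiff w) (hFdiff w), expLin_wdzbar]
      ring
    have hwz : ∀ w, wdz (fun x =>
          (K * Complex.exp ((-(conj s₀)/2) * x + (s₀/2) * conj x)) * F x) w
        = (K * Complex.exp ((-(conj s₀)/2) * w + (s₀/2) * conj w)) *
            ((-(conj s₀)/2) * F w + wdz F w) := by
      intro w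
      rw [wdz_mul (hEdiff w) (hFdiff w), expLin_wdz]
      ring
    have hlapG : lap (fun x =>
          (K * Complex.exp ((-(conj s₀)/2) * x + (s₀/2) * conj x)) * F x) z
        = (K * Complex.exp ((-(conj s₀)/2) * z + (s₀/2) * conj z)) *
            (4 * wdz (wdzbar F) z + 4 * ((s₀/2) * wdz F z) + 4 * ((-(conj s₀)/2) * wdzbar F z)
              + 4 * ((-(conj s₀)/2) * (s₀/2) * F z)) := by
      rw [lap]
      have h1 : wdzbar (fun x =>
            (K * Complex.exp ((-(conj s₀)/2) * x + (s₀/2) * conj x)) * F x)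
          = fun w => (K * Complex.exp ((-(conj s₀)/2) * w + (s₀/2) * conj w)) *
              ((s₀/2) * F w + wdzbar F w) := funext hwb
      rw [h1, wdz_mul (g := fun w => s₀/2 * F w + wdzbar F w) (hEdiff z)
          (((hFdiff z).const_mul (s₀/2)).add (hFbdiff z)),
        wdz_add ((hFdiff z).const_mul (s₀/2)) (hFbdiff z), wdz_const_mul (s₀/2) (hFdiff z),
        expLin_wdz]
      ring
    rw [DeltaB, DeltaTau, hlapG, hwz z, hwb z, hS z, hlapτ z, hlapτb z, lap,
      abs_sq_c, abs_sq_c]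
    simp only [map_add, map_mul, Complex.conj_ofReal, Complex.conj_conj]
    ring
  constructor
  · rintro ⟨hA1, hA2⟩
    constructor
    · intro γ hγ z
      rw [hA1 γ hγ z, chiTau]
      linear_combination ((χ γ : ℂ) * F z) * key γ z
    · intro z
      rw [hlap z, hA2 z]
      ring
  · rintro ⟨hB1, hB2⟩
    constructor
    · intro γ hγ z
      have h := hB1 γ hγ z
      rw [chiTau] at h
      have h2 : Complex.exp (Complex.I * ((φ (Gact γ z) : ℝ) : ℂ)) * F (Gact γ z)
          = Complex.exp (Complex.I * ((φ (Gact γ z) : ℝ) : ℂ)) *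
            ((χ γ : ℂ) * jfac ν γ z * jfac μ (ρ γ) (τ z) * F z) := by
        rw [h]
        linear_combination ((χ γ : ℂ) * F z) * (key γ z).symm
      exact mul_left_cancel₀ (Complex.exp_ne_zero _) h2
    · intro z
      have h := hB2 z
      rw [hlap z] at h
      exact mul_left_cancel₀ (Complex.exp_ne_zero _) (by linear_combination h)
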